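/- For a C⁶ function φ : ℝ² → ℝ, the mixed derivative approximation ∂_{ξη}φ ≈ δ_ξ (∂_η φ) + δ_η (∂_ξ φ) − δ_ξ δ_η φ has truncation error O(h²k²), where δ_ξ and δ_η are the central first difference operators with spacings h and k. -/

import Mathlib

/-- Directional partial derivative on ℝ². -/
noncomputable def pd2 (v : ℝ × ℝ) (f : ℝ × ℝ → ℝ) : ℝ × ℝ → ℝ :=
  fun p => fderiv ℝ f p v

open Set

lemma mvt_seg (u u' : ℝ → ℝ) (hu : ∀ t, HasDerivAt u (u' t) t) (C t₀ : ℝ)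
    (hC : ∀ t, |t| ≤ |t₀| → |u' t| ≤ C) : |u t₀ - u 0| ≤ C * |t₀| := by
  have hs : Convex ℝ (segment ℝ (0:ℝ) t₀) := convex_segment _ _
  have := hs.norm_image_sub_le_of_norm_hasDerivWithin_le
    (f := u) (f' := u') (C := C)
    (fun x _ => (hu x).hasDerivWithinAt)
    (fun x hx => by
      rcases hx with ⟨a, b, ha, hb, hab, hx⟩
      have hx' : b * t₀ = x := by simpa using hx
      have : |x| ≤ |t₀| := by
        rw [← hx', abs_mul, abs_of_nonneg hb]
        nlinarith [abs_nonneg t₀]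
      exact hC x this)
    (left_mem_segment ℝ 0 t₀) (right_mem_segment ℝ 0 t₀)
  simpa [Real.norm_eq_abs, abs_sub_comm] using this

lemma shift_hasDerivAt {f f' : ℝ → ℝ} (hf : ∀ t, HasDerivAt f (f' t) t) (x s : ℝ) :
    HasDerivAt (fun u => f (x + u)) (f' (x + s)) s := by
  have := (hf (x + s)).comp s ((hasDerivAt_id s).const_add x)
  exact this.congr_deriv (mul_one _)

lemma taylor3 (f f1 f2 f3 : ℝ → ℝ)
    (h1 : ∀ t, HasDerivAt f (f1 t) t) (h2 : ∀ t, HasDerivAt f1 (f2 t) t)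
    (h3 : ∀ t, HasDerivAt f2 (f3 t) t) (B : ℝ) (hB : ∀ t, |f3 t| ≤ B)
    (x t : ℝ) : |f (x + t) - f x - f1 x * t - f2 x * t ^ 2 / 2| ≤ B * |t| ^ 3 := by
  have hB0 : 0 ≤ B := le_trans (abs_nonneg _) (hB 0)
  set e2 : ℝ → ℝ := fun s => f2 (x + s) - f2 x with he2
  have d2 : ∀ s, HasDerivAt e2 (f3 (x + s)) s := fun s => (shift_hasDerivAt h3 x s).sub_const _
  have b2 : ∀ s, |e2 s| ≤ B * |s| := by
    intro s
    have := mvt_seg e2 (fun s => f3 (x + s)) d2 B s (fun t _ => hB _)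
    simpa [he2] using this
  set e1 : ℝ → ℝ := fun s => f1 (x + s) - f1 x - f2 x * s with he1
  have d1 : ∀ s, HasDerivAt e1 (e2 s) s := by
    intro s
    have := ((shift_hasDerivAt h2 x s).sub_const (f1 x)).sub
      ((hasDerivAt_id s).const_mul (f2 x))
    exact this.congr_deriv (by simp [he2])
  have b1 : ∀ s, |e1 s| ≤ B * |s| ^ 2 := by
    intro s
    have := mvt_seg e1 e2 d1 (B * |s|) s
      (fun t ht => le_trans (b2 t) (by nlinarith [abs_nonneg t, abs_nonneg s]))
    have h0 : e1 0 = 0 := by simp [he1]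
    rw [h0, sub_zero] at this
    calc |e1 s| ≤ B * |s| * |s| := this
    _ = B * |s| ^ 2 := by ring
  set e0 : ℝ → ℝ := fun s => f (x + s) - f x - f1 x * s - f2 x * s ^ 2 / 2 with he0
  have d0 : ∀ s, HasDerivAt e0 (e1 s) s := by
    intro s
    have hq : HasDerivAt (fun s : ℝ => f2 x * s ^ 2 / 2) (f2 x * s) s := by
      have := ((hasDerivAt_pow 2 s).const_mul (f2 x)).div_const 2
      exact this.congr_deriv (by push_cast; ring)
    have := (((shift_hasDerivAt h1 x s).sub_const (f x)).sub
      ((hasDerivAt_id s).const_mul (f1 x))).sub hq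
    exact this.congr_deriv (by simp [he1])
  have b0 := mvt_seg e0 e1 d0 (B * |t| ^ 2) t
      (fun s hs => le_trans (b1 s) (mul_le_mul_of_nonneg_left (pow_le_pow_left₀ (abs_nonneg s) hs 2) hB0))
  have h0 : e0 0 = 0 := by simp [he0]
  rw [h0, sub_zero] at b0
  calc |e0 t| ≤ B * |t| ^ 2 * |t| := b0
  _ = B * |t| ^ 3 := by ring

lemma central (f f1 f2 f3 : ℝ → ℝ)
    (h1 : ∀ t, HasDerivAt f (f1 t) t) (h2 : ∀ t, HasDerivAt f1 (f2 t) t)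
    (h3 : ∀ t, HasDerivAt f2 (f3 t) t) (B : ℝ) (hB : ∀ t, |f3 t| ≤ B)
    (x h : ℝ) (hh : 0 < h) :
    |(f (x + h) - f (x - h)) / (2 * h) - f1 x| ≤ B * h ^ 2 := by
  have hB0 : 0 ≤ B := le_trans (abs_nonneg _) (hB 0)
  have tp := taylor3 f f1 f2 f3 h1 h2 h3 B hB x h
  have tm := taylor3 f f1 f2 f3 h1 h2 h3 B hB x (-h)
  rw [abs_neg, abs_of_pos hh] at tm
  rw [abs_of_pos hh] at tp
  have key : (f (x + h) - f (x - h)) / (2 * h) - f1 x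
      = ((f (x + h) - f x - f1 x * h - f2 x * h ^ 2 / 2)
        - (f (x + (-h)) - f x - f1 x * (-h) - f2 x * (-h) ^ 2 / 2)) / (2 * h) := by
    have : x - h = x + (-h) := by ring
    rw [this]
    field_simp
    ring
  rw [key]
  rw [abs_div, abs_of_pos (by linarith : (0:ℝ) < 2 * h)]
  rw [div_le_iff₀ (by linarith)]
  calc |_ - _| ≤ B * h ^ 3 + B * h ^ 3 := by
        refine le_trans (abs_sub _ _) (add_le_add tp tm)
  _ ≤ B * h ^ 2 * (2 * h) := by nlinarith

lemma contDiff_pd2 {m : ℕ} {f : ℝ × ℝ → ℝ} (hf : ContDiff ℝ ((m + 1 : ℕ)) f) (v : ℝ × ℝ) :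
    ContDiff ℝ (m : ℕ) (pd2 v f) := by
  have h : ContDiff ℝ (m : ℕ) (fderiv ℝ f) :=
    hf.fderiv_right (by exact_mod_cast le_rfl)
  exact (ContinuousLinearMap.apply ℝ ℝ v).contDiff.comp h

lemma chain_contDiff : ∀ (l : List (ℝ × ℝ)) (m : ℕ) (f : ℝ × ℝ → ℝ),
    ContDiff ℝ ((m + l.length : ℕ)) f → ContDiff ℝ (m : ℕ) (List.foldr pd2 f l)
  | [], m, f, hf => by simpa using hf
  | v :: l, m, f, hf => by
    have h1 : ContDiff ℝ ((m + 1 : ℕ)) (List.foldr pd2 f l) := by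
      apply chain_contDiff l (m + 1) f
      convert hf using 2
      simp [List.length_cons]; omega
    exact contDiff_pd2 h1 v

lemma hasDerivAt_lineX {f : ℝ × ℝ → ℝ} (hf : Differentiable ℝ f) (y x : ℝ) :
    HasDerivAt (fun t => f (t, y)) (pd2 (1, 0) f (x, y)) x := by
  have hc : HasDerivAt (fun t : ℝ => (t, y)) ((1 : ℝ), (0 : ℝ)) x :=
    (hasDerivAt_id x).prodMk (hasDerivAt_const x y)
  exact (hf (x, y)).hasFDerivAt.comp_hasDerivAt x hc

lemma hasDerivAt_lineY {f : ℝ × ℝ → ℝ} (hf : Differentiable ℝ f) (x y : ℝ) :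
    HasDerivAt (fun s => f (x, s)) (pd2 (0, 1) f (x, y)) y := by
  have hc : HasDerivAt (fun s : ℝ => (x, s)) ((0 : ℝ), (1 : ℝ)) y :=
    (hasDerivAt_const y x).prodMk (hasDerivAt_id y)
  exact (hf (x, y)).hasFDerivAt.comp_hasDerivAt y hc

lemma pd2_pd2 {f : ℝ × ℝ → ℝ} (hf : ContDiff ℝ 2 f) (u v : ℝ × ℝ) (p : ℝ × ℝ) :
    pd2 u (pd2 v f) p = fderiv ℝ (fderiv ℝ f) p u v := by
  have hd2 : DifferentiableAt ℝ (fderiv ℝ f) p := by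
    have : ContDiff ℝ (1 : ℕ) (fderiv ℝ f) := hf.fderiv_right (by norm_num)
    exact (this.differentiable (by simp)) p
  have hc := (ContinuousLinearMap.apply ℝ ℝ v).hasFDerivAt.comp p hd2.hasFDerivAt
  have h2 : HasFDerivAt (pd2 v f)
      ((ContinuousLinearMap.apply ℝ ℝ v).comp (fderiv ℝ (fderiv ℝ f) p)) p := hc
  show fderiv ℝ (pd2 v f) p u = _
  rw [h2.fderiv]
  rfl

lemma pd2_swap {f : ℝ × ℝ → ℝ} (hf : ContDiff ℝ 2 f) (u v : ℝ × ℝ) :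
    pd2 u (pd2 v f) = pd2 v (pd2 u f) := by
  funext p
  rw [pd2_pd2 hf u v p, pd2_pd2 hf v u p]
  exact (hf.contDiffAt.isSymmSndFDerivAt (by simp)) u v

lemma pd2_iterNorm {n : ℕ} {f : ℝ × ℝ → ℝ} (hf : ContDiff ℝ ((n + 1 : ℕ)) f)
    (v : ℝ × ℝ) (p : ℝ × ℝ) :
    ‖iteratedFDeriv ℝ n (pd2 v f) p‖ ≤ ‖v‖ * ‖iteratedFDeriv ℝ (n + 1) f p‖ := by
  have h1 : ContDiff ℝ (n : ℕ) (fderiv ℝ f) := hf.fderiv_right (by exact_mod_cast le_rfl)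
  have h2 := norm_iteratedFDeriv_clm_apply_const (f := fderiv ℝ f) (c := v) (x := p)
    (n := n) h1.contDiffAt le_rfl
  rw [norm_iteratedFDeriv_fderiv] at h2
  exact h2

lemma chain_bound : ∀ (l : List (ℝ × ℝ)), (∀ v ∈ l, ‖v‖ ≤ 1) →
    ∀ (n : ℕ) (f : ℝ × ℝ → ℝ), ContDiff ℝ ((n + l.length : ℕ)) f → ∀ p,
    ‖iteratedFDeriv ℝ n (List.foldr pd2 f l) p‖ ≤ ‖iteratedFDeriv ℝ (n + l.length) f p‖
  | [], _, n, f, hf, p => by simp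
  | v :: l, hv, n, f, hf, p => by
    have hf' : ContDiff ℝ (((n + 1) + l.length : ℕ)) f := by
      convert hf using 2; simp [List.length_cons]; omega
    have h1 : ContDiff ℝ ((n + 1 : ℕ)) (List.foldr pd2 f l) := chain_contDiff l (n + 1) f hf'
    have h2 := pd2_iterNorm h1 v p
    have h3 := chain_bound l (fun w hw => hv w (List.mem_cons_of_mem v hw)) (n + 1) f hf' p
    have h4 : ‖v‖ ≤ 1 := hv v List.mem_cons_self
    calc ‖iteratedFDeriv ℝ n (List.foldr pd2 f (v :: l)) p‖
        ≤ ‖v‖ * ‖iteratedFDeriv ℝ (n + 1) (List.foldr pd2 f l) p‖ := h2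
      _ ≤ 1 * ‖iteratedFDeriv ℝ (n + 1 + l.length) f p‖ :=
          mul_le_mul h4 h3 (norm_nonneg _) zero_le_one
      _ = ‖iteratedFDeriv ℝ (n + (v :: l).length) f p‖ := by
          have hlen : n + 1 + l.length = n + (v :: l).length := by
            simp [List.length_cons]; omega
          rw [one_mul, hlen]

/-- The compact mixed-derivative approximation
∂_{ξη}φ ≈ δ_ξ(∂_ηφ) + δ_η(∂_ξφ) − δ_ξδ_ηφ has truncation error O(h²k²) for C⁶
functions with bounded derivatives up to order 6. -/
theorem stmt6 (φ : ℝ × ℝ → ℝ) (M : ℝ) (hφ : ContDiff ℝ 6 φ)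
    (hM : ∀ n : ℕ, n ≤ 6 → ∀ p : ℝ × ℝ, ‖iteratedFDeriv ℝ n φ p‖ ≤ M) :
    ∃ C : ℝ, ∀ h k : ℝ, 0 < h → 0 < k → ∀ ξ η : ℝ,
      |pd2 (1, 0) (pd2 (0, 1) φ) (ξ, η) -
        ((pd2 (0, 1) φ (ξ + h, η) - pd2 (0, 1) φ (ξ - h, η)) / (2 * h)
          + (pd2 (1, 0) φ (ξ, η + k) - pd2 (1, 0) φ (ξ, η - k)) / (2 * k)
          - (φ (ξ + h, η + k) - φ (ξ + h, η - k) - φ (ξ - h, η + k) + φ (ξ - h, η - k))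
              / (4 * h * k))| ≤ C * h ^ 2 * k ^ 2 := by
  refine ⟨M, fun h k hh hk ξ η => ?_⟩
  have hCD : ∀ l : List (ℝ × ℝ), ∀ m : ℕ, m + l.length ≤ 6 →
      ContDiff ℝ (m : ℕ) (List.foldr pd2 φ l) := by
    intro l m hm
    exact chain_contDiff l m φ (hφ.of_le (by exact_mod_cast hm))
  have hDiff : ∀ l : List (ℝ × ℝ), l.length ≤ 5 →
      Differentiable ℝ (List.foldr pd2 φ l) := by
    intro l hl
    exact (hCD l 1 (by omega)).differentiable (by simp)
  have hC2 : ∀ l : List (ℝ × ℝ), l.length ≤ 4 →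
      ContDiff ℝ 2 (List.foldr pd2 φ l) := by
    intro l hl
    exact (hCD l 2 (by omega)).of_le (by exact_mod_cast le_rfl)
  have hex : ‖((1 : ℝ), (0 : ℝ))‖ ≤ 1 := by simp [Prod.norm_def]
  have hey : ‖((0 : ℝ), (1 : ℝ))‖ ≤ 1 := by simp [Prod.norm_def]
  have hBnd : ∀ l : List (ℝ × ℝ), (∀ v ∈ l, ‖v‖ ≤ 1) → l.length ≤ 6 → ∀ p : ℝ × ℝ,
      |List.foldr pd2 φ l p| ≤ M := by
    intro l hv hl p
    have h0 := chain_bound l hv 0 φ (hφ.of_le (by exact_mod_cast (by omega : 0 + l.length ≤ 6))) p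
    calc |List.foldr pd2 φ l p| = ‖iteratedFDeriv ℝ 0 (List.foldr pd2 φ l) p‖ := by
          rw [norm_iteratedFDeriv_zero, Real.norm_eq_abs]
      _ ≤ ‖iteratedFDeriv ℝ (0 + l.length) φ p‖ := h0
      _ ≤ M := hM _ (by omega) p
  -- differentiability facts
  have dφ : Differentiable ℝ φ := by simpa using hDiff [] (by simp)
  have dφ1 : Differentiable ℝ (pd2 (1, 0) φ) := by
    simpa using hDiff [(1, 0)] (by simp)
  have dφ11 : Differentiable ℝ (pd2 (1, 0) (pd2 (1, 0) φ)) := by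
    simpa using hDiff [(1, 0), (1, 0)] (by simp)
  have dφ111 : Differentiable ℝ (pd2 (1, 0) (pd2 (1, 0) (pd2 (1, 0) φ))) := by
    simpa using hDiff [(1, 0), (1, 0), (1, 0)] (by simp)
  have dφ2 : Differentiable ℝ (pd2 (0, 1) φ) := by
    simpa using hDiff [(0, 1)] (by simp)
  have dφ12 : Differentiable ℝ (pd2 (1, 0) (pd2 (0, 1) φ)) := by
    simpa using hDiff [(1, 0), (0, 1)] (by simp)
  have dφ112 : Differentiable ℝ (pd2 (1, 0) (pd2 (1, 0) (pd2 (0, 1) φ))) := by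
    simpa using hDiff [(1, 0), (1, 0), (0, 1)] (by simp)
  have dA : Differentiable ℝ (pd2 (0, 1) (pd2 (1, 0) (pd2 (1, 0) (pd2 (1, 0) φ)))) := by
    simpa using hDiff [(0, 1), (1, 0), (1, 0), (1, 0)] (by simp)
  have dB : Differentiable ℝ
      (pd2 (0, 1) (pd2 (0, 1) (pd2 (1, 0) (pd2 (1, 0) (pd2 (1, 0) φ))))) := by
    simpa using hDiff [(0, 1), (0, 1), (1, 0), (1, 0), (1, 0)] (by simp)
  -- swap
  have c2φ : ContDiff ℝ 2 φ := by simpa using hC2 [] (by simp)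
  have c2φ1 : ContDiff ℝ 2 (pd2 (1, 0) φ) := by simpa using hC2 [(1, 0)] (by simp)
  have c2φ11 : ContDiff ℝ 2 (pd2 (1, 0) (pd2 (1, 0) φ)) := by
    simpa using hC2 [(1, 0), (1, 0)] (by simp)
  have hsw : pd2 (1, 0) (pd2 (1, 0) (pd2 (1, 0) (pd2 (0, 1) φ)))
      = pd2 (0, 1) (pd2 (1, 0) (pd2 (1, 0) (pd2 (1, 0) φ))) := by
    rw [pd2_swap c2φ (1, 0) (0, 1), pd2_swap c2φ1 (1, 0) (0, 1),
      pd2_swap c2φ11 (1, 0) (0, 1)]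
  -- inner bound
  have hg3 : ∀ t : ℝ,
      |(pd2 (1, 0) (pd2 (1, 0) (pd2 (1, 0) φ)) (t, η + k)
          - pd2 (1, 0) (pd2 (1, 0) (pd2 (1, 0) φ)) (t, η - k)) / (2 * k)
        - pd2 (1, 0) (pd2 (1, 0) (pd2 (1, 0) (pd2 (0, 1) φ))) (t, η)| ≤ M * k ^ 2 := by
    intro t
    rw [hsw]
    have hB3 : ∀ s : ℝ,
        |pd2 (0, 1) (pd2 (0, 1) (pd2 (0, 1) (pd2 (1, 0) (pd2 (1, 0) (pd2 (1, 0) φ)))))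
          (t, s)| ≤ M := by
      intro s
      simpa using hBnd [(0, 1), (0, 1), (0, 1), (1, 0), (1, 0), (1, 0)]
        (by intro v hv; fin_cases hv <;> first | exact hex | exact hey) (by simp) (t, s)
    exact central
      (fun s => pd2 (1, 0) (pd2 (1, 0) (pd2 (1, 0) φ)) (t, s))
      (fun s => pd2 (0, 1) (pd2 (1, 0) (pd2 (1, 0) (pd2 (1, 0) φ))) (t, s))
      (fun s => pd2 (0, 1) (pd2 (0, 1) (pd2 (1, 0) (pd2 (1, 0) (pd2 (1, 0) φ)))) (t, s))
      (fun s => pd2 (0, 1) (pd2 (0, 1) (pd2 (0, 1) (pd2 (1, 0) (pd2 (1, 0) (pd2 (1, 0) φ)))))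
        (t, s))
      (fun s => hasDerivAt_lineY dφ111 t s)
      (fun s => hasDerivAt_lineY dA t s)
      (fun s => hasDerivAt_lineY dB t s)
      M hB3 η k hk
  -- outer central difference
  set G : ℝ → ℝ := fun t => (φ (t, η + k) - φ (t, η - k)) / (2 * k)
    - pd2 (0, 1) φ (t, η) with hGdef
  set G1 : ℝ → ℝ := fun t => (pd2 (1, 0) φ (t, η + k) - pd2 (1, 0) φ (t, η - k)) / (2 * k)
    - pd2 (1, 0) (pd2 (0, 1) φ) (t, η) with hG1def
  set G2 : ℝ → ℝ := fun t =>
    (pd2 (1, 0) (pd2 (1, 0) φ) (t, η + k) - pd2 (1, 0) (pd2 (1, 0) φ) (t, η - k)) / (2 * k)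
    - pd2 (1, 0) (pd2 (1, 0) (pd2 (0, 1) φ)) (t, η) with hG2def
  set G3 : ℝ → ℝ := fun t =>
    (pd2 (1, 0) (pd2 (1, 0) (pd2 (1, 0) φ)) (t, η + k)
      - pd2 (1, 0) (pd2 (1, 0) (pd2 (1, 0) φ)) (t, η - k)) / (2 * k)
    - pd2 (1, 0) (pd2 (1, 0) (pd2 (1, 0) (pd2 (0, 1) φ))) (t, η) with hG3def
  have hG1 : ∀ t, HasDerivAt G (G1 t) t := by
    intro t
    exact (((hasDerivAt_lineX dφ (η + k) t).sub (hasDerivAt_lineX dφ (η - k) t)).div_const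
      (2 * k)).sub (hasDerivAt_lineX dφ2 η t)
  have hG2 : ∀ t, HasDerivAt G1 (G2 t) t := by
    intro t
    exact (((hasDerivAt_lineX dφ1 (η + k) t).sub (hasDerivAt_lineX dφ1 (η - k) t)).div_const
      (2 * k)).sub (hasDerivAt_lineX dφ12 η t)
  have hG3 : ∀ t, HasDerivAt G2 (G3 t) t := by
    intro t
    exact (((hasDerivAt_lineX dφ11 (η + k) t).sub (hasDerivAt_lineX dφ11 (η - k) t)).div_const
      (2 * k)).sub (hasDerivAt_lineX dφ112 η t)
  have houter := central G G1 G2 G3 hG1 hG2 hG3 (M * k ^ 2) hg3 ξ h hh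
  have hkey : pd2 (1, 0) (pd2 (0, 1) φ) (ξ, η) -
      ((pd2 (0, 1) φ (ξ + h, η) - pd2 (0, 1) φ (ξ - h, η)) / (2 * h)
        + (pd2 (1, 0) φ (ξ, η + k) - pd2 (1, 0) φ (ξ, η - k)) / (2 * k)
        - (φ (ξ + h, η + k) - φ (ξ + h, η - k) - φ (ξ - h, η + k) + φ (ξ - h, η - k))
            / (4 * h * k))
      = (G (ξ + h) - G (ξ - h)) / (2 * h) - G1 ξ := by
    rw [hGdef, hG1def]
    have hh0 : h ≠ 0 := ne_of_gt hh
    have hk0 : k ≠ 0 := ne_of_gt hk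
    field_simp
    ring
  rw [hkey]
  calc |(G (ξ + h) - G (ξ - h)) / (2 * h) - G1 ξ| ≤ M * k ^ 2 * h ^ 2 := houter
    _ = M * h ^ 2 * k ^ 2 := by ring
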